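/- Fix a natural number n and an element w of the free group on n generators x₁, …, xₙ. There exists a polynomial P with integer coefficients in variables indexed by the nonempty subsets {i₁ < i₂ < … < i_k} of {1, …, n} such that for every commutative ring R with identity and every n-tuple A₁, …, Aₙ of elements of SL(2,R), the trace of the matrix obtained by substituting A_i for x_i in w equals the evaluation of P at the values tr(A_{i₁}A_{i₂}⋯A_{i_k}) (as the index ranges over all nonempty subsets {i₁ < … < i_k} of {1, …, n}). -/

import Mathlib

/-- `SL(2,K)`: 2×2 matrices of determinant 1. -/
abbrev SL2 (K : Type*) [CommRing K] := Matrix.SpecialLinearGroup (Fin 2) K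

/-- A field is quadratically closed if every monic quadratic has a root. -/
def QuadClosed (K : Type*) [Field K] : Prop :=
  ∀ a b : K, ∃ x : K, x ^ 2 + a * x + b = 0

/-- The trace of an element of `SL(2,K)`. -/
def trM {K : Type*} [CommRing K] (A : SL2 K) : K :=
  Matrix.trace (A : Matrix (Fin 2) (Fin 2) K)

/-- `f : G → K` is an `SL(2,K)` character: the trace function of some representation. -/
def IsSL2Character {K : Type*} [CommRing K] {G : Type*} [Group G] (f : G → K) : Prop :=
  ∃ ρ : G →* SL2 K, ∀ g : G, f g = trM (ρ g)

/-- A subgroup of `SL(2,K)` is reducible if some 1-dimensional subspace (the span of a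
nonzero vector `v`) is invariant under all its elements. -/
def IsReducibleSubgroup {K : Type*} [Field K] (H : Subgroup (SL2 K)) : Prop :=
  ∃ v : Fin 2 → K, v ≠ 0 ∧ ∀ A ∈ H, ∃ c : K,
    Matrix.mulVec (A : Matrix (Fin 2) (Fin 2) K) v = c • v

/-- A representation to `SL(2,K)` is reducible if some 1-dimensional subspace is invariant
under the image. -/
def IsReducibleRep {K : Type*} [Field K] {G : Type*} [Group G] (ρ : G →* SL2 K) : Prop :=
  ∃ v : Fin 2 → K, v ≠ 0 ∧ ∀ g : G, ∃ c : K,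
    Matrix.mulVec ((ρ g : SL2 K) : Matrix (Fin 2) (Fin 2) K) v = c • v

namespace FrickeAux

open Matrix MvPolynomial

variable {R : Type*} [CommRing R] {n : ℕ} {α : Type*}

/-! list lemmas -/

lemma dup_decomp {l : List α} (h : ¬ l.Nodup) :
    ∃ (p : List α) (x : α) (m s : List α), l = p ++ x :: (m ++ x :: s) := by
  induction l with
  | nil => simp at h
  | cons a t ih =>
    by_cases ht : t.Nodup
    · have ha : a ∈ t := by
        by_contra ha; exact h (List.nodup_cons.mpr ⟨ha, ht⟩)
      obtain ⟨m, s, rfl⟩ := List.append_of_mem ha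
      exact ⟨[], a, m, s, rfl⟩
    · obtain ⟨p, x, m, s, rfl⟩ := ih ht
      exact ⟨a :: p, x, m, s, rfl⟩

lemma descent [LinearOrder α] {l : List α} (h : ¬ l.Pairwise (· ≤ ·)) :
    ∃ (u : List α) (a b : α) (v : List α), l = u ++ a :: b :: v ∧ b < a := by
  induction l with
  | nil => exact absurd List.Pairwise.nil h
  | cons a t ih =>
    by_cases ht : t.Pairwise (· ≤ ·)
    · match t, ht with
      | [], _ => exact absurd (List.pairwise_singleton _ a) h
      | b :: t', ht =>
        rcases le_or_gt a b with hab | hab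
        · exfalso
          apply h
          rw [List.pairwise_cons]
          refine ⟨?_, ht⟩
          intro z hz
          rcases List.mem_cons.mp hz with rfl | hz'
          · exact hab
          · exact hab.trans ((List.pairwise_cons.mp ht).1 z hz')
        · exact ⟨[], a, b, t', rfl, hab⟩
    · obtain ⟨u, x, y, v, rfl, hy⟩ := ih ht
      exact ⟨a :: u, x, y, v, rfl, hy⟩

def invc [LinearOrder α] : List α → ℕ
  | [] => 0
  | a :: t => t.countP (fun b => decide (b < a)) + invc t

lemma invc_swap [LinearOrder α] (u : List α) {a b : α} (v : List α) (hba : b < a) :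
    invc (u ++ b :: a :: v) < invc (u ++ a :: b :: v) := by
  induction u with
  | nil =>
    simp [invc, List.countP_cons, hba, not_lt_of_gt hba]
    omega
  | cons c u ih =>
    simp only [List.cons_append, invc, List.append_eq]
    have hc : (u ++ b :: a :: v).countP (fun x => decide (x < c)) =
        (u ++ a :: b :: v).countP (fun x => decide (x < c)) := by
      simp [List.countP_append, List.countP_cons]; ring
    omega

lemma pos_rep {q : List (α × Bool)} (h : ∀ p ∈ q, p.2 = true) :
    q = (q.map Prod.fst).map (fun i => (i, true)) := by
  induction q with
  | nil => rfl
  | cons p t ih =>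
    obtain ⟨i, b⟩ := p
    have hb : b = true := h _ List.mem_cons_self
    subst hb
    simp only [List.map_cons]
    rw [← ih (fun p hp => h p (List.mem_cons_of_mem _ hp))]

/-! matrix identities -/

lemma trace_mul_adjugate (U V : Matrix (Fin 2) (Fin 2) R) :
    trace (U * adjugate V) = trace U * trace V - trace (U * V) := by
  simp [trace_fin_two, mul_apply, Fin.sum_univ_two, adjugate_fin_two]; ring

lemma trM_mul_inv (U V : SL2 R) : trM (U * V⁻¹) = trM U * trM V - trM (U * V) := by
  simp only [trM, Matrix.SpecialLinearGroup.coe_mul, Matrix.SpecialLinearGroup.coe_inv]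
  exact trace_mul_adjugate _ _

lemma trM_inv (V : SL2 R) : trM V⁻¹ = trM V := by
  simp [trM, Matrix.SpecialLinearGroup.coe_inv, adjugate_fin_two, trace_fin_two, add_comm]

lemma trM_mul' (U V : SL2 R) : trM (U * V) = trM U * trM V - trM (U * V⁻¹) := by
  have := trM_mul_inv U V⁻¹
  rw [inv_inv, trM_inv] at this
  exact this

lemma trM_mul_comm (U V : SL2 R) : trM (U * V) = trM (V * U) := by
  simp only [trM, Matrix.SpecialLinearGroup.coe_mul]
  exact Matrix.trace_mul_comm _ _

lemma trM_conj (B Z : SL2 R) : trM (B * Z * B⁻¹) = trM Z := by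
  rw [trM_mul_comm]; group

lemma trM_swap (X a b : SL2 R) :
    trM (X * a * b) + trM (X * b * a) =
      trM b * trM (X * a) + trM a * trM (X * b)
        + (trM (a * b) - trM a * trM b) * trM X := by
  simp only [trM, Matrix.SpecialLinearGroup.coe_mul]
  simp [trace_fin_two, mul_apply, Fin.sum_univ_two]; ring

lemma trM_one : trM (1 : SL2 R) = 2 := by
  simp [trM, Matrix.SpecialLinearGroup.coe_one, trace_fin_two]

/-! word products and the subring of subset traces -/

def Mw (A : Fin n → SL2 R) (q : List (Fin n × Bool)) : SL2 R :=
  (q.map fun p => cond p.2 (A p.1) (A p.1)⁻¹).prod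

def Mp (A : Fin n → SL2 R) (l : List (Fin n)) : SL2 R := (l.map A).prod

def Sgen (A : Fin n → SL2 R) : Subring R :=
  Subring.closure (Set.range fun s : {s : Finset (Fin n) // s.Nonempty} =>
    trM (((s.1.sort (· ≤ ·)).map A).prod))

def negCount (q : List (Fin n × Bool)) : ℕ := q.countP fun p => !p.2

lemma Mw_append (A : Fin n → SL2 R) (u v : List (Fin n × Bool)) :
    Mw A (u ++ v) = Mw A u * Mw A v := by
  simp [Mw]

lemma Mp_append (A : Fin n → SL2 R) (u v : List (Fin n)) :
    Mp A (u ++ v) = Mp A u * Mp A v := by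
  simp [Mp]

lemma Mp_cons (A : Fin n → SL2 R) (a : Fin n) (l : List (Fin n)) :
    Mp A (a :: l) = A a * Mp A l := by
  simp [Mp]

lemma Mw_pos (A : Fin n → SL2 R) (l : List (Fin n)) :
    Mw A (l.map fun i => (i, true)) = Mp A l := by
  simp [Mw, Mp, List.map_map]; rfl

lemma Mp_inv (A : Fin n → SL2 R) (l : List (Fin n)) :
    (Mp A l)⁻¹ = Mw A (l.reverse.map fun i => (i, false)) := by
  simp [Mp, Mw, List.prod_inv_reverse, List.map_map, List.map_reverse]
  rfl

lemma trM_Mw_rot (A : Fin n → SL2 R) (u v : List (Fin n × Bool)) :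
    trM (Mw A (u ++ v)) = trM (Mw A (v ++ u)) := by
  rw [Mw_append, Mw_append, trM_mul_comm]

lemma trM_Mp_rot (A : Fin n → SL2 R) (u v : List (Fin n)) :
    trM (Mp A (u ++ v)) = trM (Mp A (v ++ u)) := by
  rw [Mp_append, Mp_append, trM_mul_comm]

lemma gen_mem (A : Fin n → SL2 R) {l : List (Fin n)} (hne : l ≠ [])
    (hnd : l.Nodup) (hs : l.Pairwise (· ≤ ·)) : trM (Mp A l) ∈ Sgen A := by
  have h1 : l.toFinset.sort (· ≤ ·) = l := (List.toFinset_sort _ hnd).mpr hs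
  have h2 : l.toFinset.Nonempty := by
    rcases l with _ | ⟨a, t⟩
    · exact absurd rfl hne
    · exact ⟨a, by simp⟩
  refine Subring.subset_closure ⟨⟨l.toFinset, h2⟩, ?_⟩
  simp only [h1]; rfl

lemma trA_mem (A : Fin n → SL2 R) (i : Fin n) : trM (A i) ∈ Sgen A := by
  have := gen_mem A (l := [i]) (by simp) (by simp) (by simp)
  simpa [Mp] using this

lemma two_mem (A : Fin n → SL2 R) : (2 : R) ∈ Sgen A := by
  have : ((2 : ℕ) : R) ∈ Sgen A := natCast_mem (Sgen A) 2
  simpa using this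

lemma posIH {A : Fin n → SL2 R} {L : ℕ}
    (ihL : ∀ q : List (Fin n × Bool), q.length ≤ L → trM (Mw A q) ∈ Sgen A)
    (l : List (Fin n)) (h : l.length ≤ L) : trM (Mp A l) ∈ Sgen A := by
  rw [← Mw_pos]
  exact ihL _ (by simpa using h)

lemma pos_case (A : Fin n → SL2 R) (L : ℕ)
    (ihL : ∀ q : List (Fin n × Bool), q.length ≤ L → trM (Mw A q) ∈ Sgen A) :
    ∀ (k : ℕ) (l : List (Fin n)), l.length = L + 1 → invc l ≤ k →
      trM (Mp A l) ∈ Sgen A := by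
  intro k
  induction k using Nat.strong_induction_on with
  | _ k ihk =>
  intro l hlen hinv
  by_cases hnd : l.Nodup
  · by_cases hs : l.Pairwise (· ≤ ·)
    · exact gen_mem A (by intro h; rw [h] at hlen; simp at hlen) hnd hs
    · obtain ⟨u, a, b, v, rfl, hba⟩ := descent hs
      have hLlen : u.length + v.length + 2 = L + 1 := by
        simp at hlen; omega
      have e1 : trM (Mp A (u ++ a :: b :: v)) = trM (Mp A (v ++ u) * A a * A b) := by
        rw [trM_Mp_rot]
        have h' : (a :: b :: v) ++ u = [a, b] ++ (v ++ u) := by simp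
        rw [h', trM_Mp_rot, Mp_append]
        simp [Mp, mul_assoc]
      have e2 : trM (Mp A (u ++ b :: a :: v)) = trM (Mp A (v ++ u) * A b * A a) := by
        rw [trM_Mp_rot]
        have h' : (b :: a :: v) ++ u = [b, a] ++ (v ++ u) := by simp
        rw [h', trM_Mp_rot, Mp_append]
        simp [Mp, mul_assoc]
      have sw := trM_swap (Mp A (v ++ u)) (A a) (A b)
      have key : trM (Mp A (u ++ a :: b :: v)) =
          trM (A b) * trM (Mp A (v ++ u) * A a) + trM (A a) * trM (Mp A (v ++ u) * A b)
            + (trM (A a * A b) - trM (A a) * trM (A b)) * trM (Mp A (v ++ u))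
            - trM (Mp A (u ++ b :: a :: v)) := by
        rw [e1, e2]; linear_combination sw
      rw [key]
      have m1 : trM (Mp A (v ++ u) * A a) ∈ Sgen A := by
        have h' : Mp A (v ++ u) * A a = Mp A ((v ++ u) ++ [a]) := by
          simp [Mp_append, Mp, mul_assoc]
        rw [h']
        exact posIH ihL _ (by simp; omega)
      have m2 : trM (Mp A (v ++ u) * A b) ∈ Sgen A := by
        have h' : Mp A (v ++ u) * A b = Mp A ((v ++ u) ++ [b]) := by
          simp [Mp_append, Mp, mul_assoc]
        rw [h']
        exact posIH ihL _ (by simp; omega)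
      have m3 : trM (A a * A b) ∈ Sgen A := by
        have h' : trM (A a * A b) = trM (Mp A [b, a]) := by
          rw [trM_mul_comm]; simp [Mp]
        rw [h']
        exact gen_mem A (by simp) (by simp [ne_of_lt hba])
          (by simp [List.pairwise_cons, le_of_lt hba])
      have m4 : trM (Mp A (v ++ u)) ∈ Sgen A := posIH ihL _ (by simp; omega)
      have m5 : trM (Mp A (u ++ b :: a :: v)) ∈ Sgen A := by
        refine ihk (invc (u ++ b :: a :: v))
          (lt_of_lt_of_le (invc_swap u v hba) hinv) _ (by simp; omega) le_rfl
      exact Subring.sub_mem _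
        (Subring.add_mem _
          (Subring.add_mem _ (Subring.mul_mem _ (trA_mem A b) m1)
            (Subring.mul_mem _ (trA_mem A a) m2))
          (Subring.mul_mem _ (Subring.sub_mem _ m3
            (Subring.mul_mem _ (trA_mem A a) (trA_mem A b))) m4)) m5
  · obtain ⟨p, x, m, s, rfl⟩ := dup_decomp hnd
    have hLlen : p.length + m.length + s.length + 2 = L + 1 := by
      simp at hlen; omega
    have e0 : trM (Mp A (p ++ x :: (m ++ x :: s))) =
        trM ((A x * Mp A m) * (A x * Mp A (s ++ p))) := by
      rw [trM_Mp_rot]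
      have h' : (x :: (m ++ x :: s)) ++ p = x :: (m ++ (x :: (s ++ p))) := by simp
      rw [h']
      simp [Mp_cons, Mp_append, mul_assoc]
    rw [e0, trM_mul']
    have conj : (A x * Mp A m) * (A x * Mp A (s ++ p))⁻¹
        = A x * (Mp A m * (Mp A (s ++ p))⁻¹) * (A x)⁻¹ := by group
    rw [conj, trM_conj]
    have mBP : trM (A x * Mp A m) ∈ Sgen A := by
      rw [← Mp_cons]
      exact posIH ihL _ (by simp; omega)
    have mBQ : trM (A x * Mp A (s ++ p)) ∈ Sgen A := by
      rw [← Mp_cons]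
      exact posIH ihL _ (by simp; omega)
    have mPQ : trM (Mp A m * (Mp A (s ++ p))⁻¹) ∈ Sgen A := by
      rw [Mp_inv, show Mp A m = Mw A (m.map fun i => (i, true)) from (Mw_pos _ _).symm,
        ← Mw_append]
      exact ihL _ (by simp; omega)
    exact Subring.sub_mem _ (Subring.mul_mem _ mBP mBQ) mPQ

lemma neg_case (A : Fin n → SL2 R) (L : ℕ)
    (ihL : ∀ q : List (Fin n × Bool), q.length ≤ L → trM (Mw A q) ∈ Sgen A) :
    ∀ (c : ℕ) (q : List (Fin n × Bool)), q.length = L + 1 → negCount q ≤ c →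
      trM (Mw A q) ∈ Sgen A := by
  intro c
  induction c using Nat.strong_induction_on with
  | _ c ihc =>
  intro q hlen hneg
  rcases Nat.eq_zero_or_pos (negCount q) with h0 | h0
  · have hall : ∀ p ∈ q, p.2 = true := by
      intro p hp
      by_contra hb
      have h1 : 0 < q.countP (fun p => !p.2) :=
        List.countP_pos_iff.mpr ⟨p, hp, by simp [Bool.not_eq_true] at hb; simp [hb]⟩
      rw [show q.countP (fun p => !p.2) = negCount q from rfl, h0] at h1
      exact Nat.lt_irrefl 0 h1
    rw [pos_rep hall, Mw_pos]
    exact pos_case A L ihL _ _ (by simpa using hlen) le_rfl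
  · obtain ⟨pp, hp, hp2⟩ := List.countP_pos_iff.mp h0
    obtain ⟨i, b⟩ := pp
    have hb : b = false := by simpa using hp2
    subst hb
    obtain ⟨u, v, rfl⟩ := List.append_of_mem hp
    have hLlen : u.length + v.length + 1 = L + 1 := by simp at hlen; omega
    have e0 : trM (Mw A (u ++ (i, false) :: v)) = trM (Mw A (v ++ u) * (A i)⁻¹) := by
      rw [trM_Mw_rot]
      have h' : ((i, false) :: v) ++ u = [(i, false)] ++ (v ++ u) := by simp
      rw [h', trM_Mw_rot, Mw_append]
      simp [Mw, mul_assoc]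
    rw [e0, trM_mul_inv]
    have m1 : trM (Mw A (v ++ u)) ∈ Sgen A := ihL _ (by simp; omega)
    have m2 : trM (Mw A (v ++ u) * A i) ∈ Sgen A := by
      have h' : Mw A (v ++ u) * A i = Mw A ((v ++ u) ++ [(i, true)]) := by
        simp [Mw_append, Mw, mul_assoc]
      rw [h']
      have hc : 0 < c := lt_of_lt_of_le h0 hneg
      refine ihc (c - 1) (by omega) _ (by simp; omega) ?_
      have : negCount ((v ++ u) ++ [(i, true)]) + 1 = negCount (u ++ (i, false) :: v) := by
        simp [negCount, List.countP_append, List.countP_cons]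
        omega
      omega
    exact Subring.sub_mem _ (Subring.mul_mem _ m1 (trA_mem A i)) m2

lemma main (A : Fin n → SL2 R) :
    ∀ (L : ℕ) (q : List (Fin n × Bool)), q.length ≤ L → trM (Mw A q) ∈ Sgen A := by
  intro L
  induction L with
  | zero =>
    intro q hq
    have : q = [] := List.length_eq_zero_iff.mp (Nat.le_zero.mp hq)
    subst this
    show trM (Mw A []) ∈ Sgen A
    have : Mw A [] = 1 := rfl
    rw [this, trM_one]
    exact two_mem A
  | succ L ih =>
    intro q hq
    rcases Nat.lt_or_ge q.length (L + 1) with h | h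
    · exact ih q (Nat.lt_succ_iff.mp h)
    · exact neg_case A L ih (negCount q) q (le_antisymm hq h) le_rfl

lemma lift_mem (A : Fin n → SL2 R) (w : FreeGroup (Fin n)) :
    trM (FreeGroup.lift A w) ∈ Sgen A := by
  have h1 : FreeGroup.lift A w = Mw A w.toWord := by
    conv_lhs => rw [← FreeGroup.mk_toWord (x := w)]
    exact FreeGroup.lift_mk
  rw [h1]
  exact main A w.toWord.length w.toWord le_rfl





variable (n : ℕ)

/-- The universal ring for `n` generic elements of `SL₂`. -/
def URing : Type := MvPolynomial (Fin n × Fin 2 × Fin 2) ℤ ⧸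
  Ideal.span (Set.range fun i : Fin n =>
    (X (i,0,0) * X (i,1,1) - X (i,0,1) * X (i,1,0) - 1 : MvPolynomial (Fin n × Fin 2 × Fin 2) ℤ))

noncomputable instance : CommRing (URing n) := by unfold URing; infer_instance

noncomputable def umk : MvPolynomial (Fin n × Fin 2 × Fin 2) ℤ →+* URing n :=
  Ideal.Quotient.mk _

lemma umk_rel (i : Fin n) :
    umk n (X (i,0,0) * X (i,1,1) - X (i,0,1) * X (i,1,0) - 1) = 0 :=
  Ideal.Quotient.eq_zero_iff_mem.mpr (Ideal.subset_span ⟨i, rfl⟩)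

/-- The generic `SL₂` matrices. -/
noncomputable def genA (i : Fin n) : SL2 (URing n) :=
  ⟨Matrix.of fun j k => umk n (X (i, j, k)), by
    rw [Matrix.det_fin_two]
    have h := umk_rel n i
    simp only [map_sub, _root_.map_mul, _root_.map_one] at h
    simp only [Matrix.of_apply]
    linear_combination h⟩

variable {R : Type*} [CommRing R] (A : Fin n → SL2 R)

/-- Evaluation map from the universal ring given actual matrices. -/
noncomputable def uev : URing n →+* R :=
  Ideal.Quotient.lift _
    ((MvPolynomial.aeval fun p : Fin n × Fin 2 × Fin 2 =>
      ((A p.1 : Matrix (Fin 2) (Fin 2) R) p.2.1 p.2.2)).toRingHom)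
    (by
      have hle : Ideal.span (Set.range fun i : Fin n =>
          (X (i,0,0) * X (i,1,1) - X (i,0,1) * X (i,1,0) - 1 :
            MvPolynomial (Fin n × Fin 2 × Fin 2) ℤ)) ≤
          RingHom.ker ((MvPolynomial.aeval fun p : Fin n × Fin 2 × Fin 2 =>
            ((A p.1 : Matrix (Fin 2) (Fin 2) R) p.2.1 p.2.2)).toRingHom) := by
        rw [Ideal.span_le]
        rintro x ⟨i, rfl⟩
        simp only [SetLike.mem_coe, RingHom.mem_ker, AlgHom.toRingHom_eq_coe,
          RingHom.coe_coe, map_sub, _root_.map_mul, _root_.map_one, aeval_X]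
        have hd := (A i).2
        rw [Matrix.det_fin_two] at hd
        linear_combination hd
      intro a ha
      exact hle ha)

lemma uev_umk (p : MvPolynomial (Fin n × Fin 2 × Fin 2) ℤ) :
    uev n A (umk n p) =
      MvPolynomial.aeval (fun p : Fin n × Fin 2 × Fin 2 =>
        ((A p.1 : Matrix (Fin 2) (Fin 2) R) p.2.1 p.2.2)) p :=
  Ideal.Quotient.lift_mk _ _ _

noncomputable def uSL : SL2 (URing n) →* SL2 R :=
  Matrix.SpecialLinearGroup.map (uev n A)

lemma uSL_genA (i : Fin n) : uSL n A (genA n i) = A i := by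
  apply Subtype.ext
  ext j k
  show uev n A ((genA n i : Matrix (Fin 2) (Fin 2) (URing n)) j k) = _
  simp [genA, uev_umk]

lemma trM_uSL (B : SL2 (URing n)) : trM (uSL n A B) = uev n A (trM B) := by
  show Matrix.trace _ = _
  rw [trM, Matrix.trace_fin_two, Matrix.trace_fin_two, map_add]
  rfl

lemma uSL_lift (w : FreeGroup (Fin n)) :
    uSL n A (FreeGroup.lift (genA n) w) = FreeGroup.lift A w := by
  have h : (uSL n A).comp (FreeGroup.lift (genA n)) = FreeGroup.lift A := by
    apply FreeGroup.ext_hom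
    intro i
    simp [FreeGroup.lift_apply_of, uSL_genA]
  exact DFunLike.congr_fun h w


end FrickeAux

theorem trace_of_word_is_polynomial_in_subset_traces (n : ℕ) (w : FreeGroup (Fin n)) :
    ∃ P : MvPolynomial {s : Finset (Fin n) // s.Nonempty} ℤ,
      ∀ (R : Type*) [CommRing R] (A : Fin n → SL2 R),
        trM (FreeGroup.lift A w) =
          MvPolynomial.aeval
            (fun s : {s : Finset (Fin n) // s.Nonempty} =>
              trM (((s.1.sort (· ≤ ·)).map A).prod)) P := by
  classical
  let t : {s : Finset (Fin n) // s.Nonempty} → FrickeAux.URing n := fun s =>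
    trM (((s.1.sort (· ≤ ·)).map (FrickeAux.genA n)).prod)
  have hmem : trM (FreeGroup.lift (FrickeAux.genA n) w) ∈ Algebra.adjoin ℤ (Set.range t) := by
    rw [Algebra.adjoin_int]
    exact FrickeAux.lift_mem (FrickeAux.genA n) w
  rw [Algebra.adjoin_range_eq_range_aeval] at hmem
  obtain ⟨P, hP⟩ := hmem
  replace hP : (MvPolynomial.aeval t) P = trM (FreeGroup.lift (FrickeAux.genA n) w) := hP
  refine ⟨P, ?_⟩
  intro R _ A
  have h1 : trM (FreeGroup.lift A w)
      = FrickeAux.uev n A (trM (FreeGroup.lift (FrickeAux.genA n) w)) := by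
    rw [← FrickeAux.uSL_lift n A w, FrickeAux.trM_uSL]
  rw [h1, ← hP]
  have h2 : (FrickeAux.uev n A) ((MvPolynomial.aeval t) P) =
      MvPolynomial.aeval (fun s : {s : Finset (Fin n) // s.Nonempty} =>
        FrickeAux.uev n A (t s)) P :=
    DFunLike.congr_fun
      (MvPolynomial.comp_aeval (φ := (FrickeAux.uev n A).toIntAlgHom) (f := t)) P
  rw [h2]
  have h3 : (fun s : {s : Finset (Fin n) // s.Nonempty} => FrickeAux.uev n A (t s))
      = fun s : {s : Finset (Fin n) // s.Nonempty} =>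
          trM (((s.1.sort (· ≤ ·)).map A).prod) := by
    funext s
    show FrickeAux.uev n A (trM (((s.1.sort (· ≤ ·)).map (FrickeAux.genA n)).prod)) = _
    rw [← FrickeAux.trM_uSL]
    congr 1
    rw [MonoidHom.map_list_prod, List.map_map]
    have h4 : (⇑(FrickeAux.uSL n A) ∘ FrickeAux.genA n) = A := by
      funext i
      exact FrickeAux.uSL_genA n A i
    rw [h4]
  rw [h3]
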